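/- Let t be a contraction on H with Tr(1 − tt*) < ∞, and let t_∞ be a bounded operator on H such that t^k (t*)^k h → t_∞ h for every h ∈ H (t_∞ is the strong-operator limit of the decreasing sequence t^k(t*)^k). Then the limit L = lim_{k→∞} Tr(1 − t^k (t*)^k)/k exists, Tr((1 − t*t)^{1/2} (1 − t_∞) (1 − t*t)^{1/2}) is finite, and L + Tr((1 − t*t)^{1/2} (1 − t_∞) (1 − t*t)^{1/2}) = Tr(1 − tt*). -/

import Mathlib

open Filter Finset ContinuousLinearMap
open scoped ENNReal InnerProductSpace

/-- The trace (in `[0,∞]`) of an operator on a complex Hilbert space, computed in a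
Hilbert (orthonormal) basis `b`: `Tr A = ∑ᵢ ⟨bᵢ, A bᵢ⟩` (real part, clamped to `[0,∞]`).
For a positive operator this is the usual trace, independent of the choice of basis. -/
noncomputable def opTrace {H : Type*} [NormedAddCommGroup H] [InnerProductSpace ℂ H]
    [CompleteSpace H] {ι : Type*} (b : HilbertBasis ι ℂ H) (A : H →L[ℂ] H) : ℝ≥0∞ :=
  ∑' i, ENNReal.ofReal (inner ℂ (b i) (A (b i)) : ℂ).re

section PLaux

variable {H : Type*} [NormedAddCommGroup H] [InnerProductSpace ℂ H] [CompleteSpace H]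
  {ι : Type*} (b : HilbertBasis ι ℂ H)

omit [CompleteSpace H] in
lemma pl_re_symm (x y : H) : (⟪x, y⟫_ℂ).re = (⟪y, x⟫_ℂ).re := by
  rw [← inner_conj_symm y x, Complex.conj_re]

omit [CompleteSpace H] in
lemma pl_hassum (x : H) : HasSum (fun j => ‖(⟪b j, x⟫_ℂ)‖ ^ 2) (‖x‖ ^ 2) := by
  have h := b.hasSum_inner_mul_inner x x
  have h3 := (Complex.reCLM : ℂ →L[ℝ] ℝ).hasSum h
  simp only [Complex.reCLM_apply] at h3
  convert h3 using 2 with j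
  · rw [← inner_conj_symm x (b j), mul_comm, Complex.mul_conj]
    simp [Complex.normSq_eq_norm_sq, ← Complex.ofReal_pow]
  · rw [← RCLike.re_to_complex, inner_self_eq_norm_sq (𝕜 := ℂ)]

omit [CompleteSpace H] in
lemma pl_parseval (x : H) :
    ∑' j, ENNReal.ofReal (‖(⟪b j, x⟫_ℂ)‖ ^ 2) = ENNReal.ofReal (‖x‖ ^ 2) := by
  have h2 := pl_hassum b x
  rw [← ENNReal.ofReal_tsum_of_nonneg (fun j => by positivity) h2.summable, h2.tsum_eq]

/-- The flip identity: `∑ᵢ ‖X bᵢ‖² = ∑ᵢ ‖X* bᵢ‖²` in `ℝ≥0∞`. -/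
lemma pl_flip (X : H →L[ℂ] H) :
    ∑' i, ENNReal.ofReal (‖X (b i)‖ ^ 2) = ∑' i, ENNReal.ofReal (‖(star X) (b i)‖ ^ 2) := by
  have key : ∀ (j i : ι), ‖(⟪b j, X (b i)⟫_ℂ)‖ = ‖(⟪b i, (star X) (b j)⟫_ℂ)‖ := by
    intro j i
    rw [star_eq_adjoint, ← ContinuousLinearMap.adjoint_inner_left, ← norm_inner_symm]
  calc ∑' i, ENNReal.ofReal (‖X (b i)‖ ^ 2)
      = ∑' i, ∑' j, ENNReal.ofReal (‖(⟪b j, X (b i)⟫_ℂ)‖ ^ 2) := by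
        simp_rw [pl_parseval b]
    _ = ∑' j, ∑' i, ENNReal.ofReal (‖(⟪b j, X (b i)⟫_ℂ)‖ ^ 2) := ENNReal.tsum_comm
    _ = ∑' j, ∑' i, ENNReal.ofReal (‖(⟪b i, (star X) (b j)⟫_ℂ)‖ ^ 2) := by
        simp_rw [key]
    _ = ∑' j, ENNReal.ofReal (‖(star X) (b j)‖ ^ 2) := by simp_rw [pl_parseval b]

/-- Monotone convergence for `ℝ≥0∞`-valued `tsum`s. -/
lemma pl_tsum_iSup {ι : Type*} (f : ℕ → ι → ℝ≥0∞) (hf : ∀ i, Monotone fun k => f k i) :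
    ∑' i, ⨆ k, f k i = ⨆ k, ∑' i, f k i := by
  classical
  have hfin : ∀ s : Finset ι, ∑ i ∈ s, ⨆ k, f k i = ⨆ k, ∑ i ∈ s, f k i := by
    intro s
    induction s using Finset.induction with
    | empty => simp
    | @insert a s ha ih =>
      rw [Finset.sum_insert ha, ih,
        ENNReal.iSup_add_iSup_of_monotone (hf a)
          (fun k l hkl => Finset.sum_le_sum fun i _ => hf i hkl)]
      simp [Finset.sum_insert ha]
  rw [ENNReal.tsum_eq_iSup_sum]
  simp_rw [hfin]
  rw [iSup_comm]
  congr 1; funext k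
  exact (ENNReal.tsum_eq_iSup_sum).symm

/-- `re ⟪x, (1 - A* A) x⟫ = ‖x‖² - ‖A x‖²`. -/
lemma pl_inner_one_sub (A : H →L[ℂ] H) (x : H) :
    (⟪x, (1 - star A * A) x⟫_ℂ).re = ‖x‖ ^ 2 - ‖A x‖ ^ 2 := by
  have h1 : (1 - star A * A) x = x - (star A) (A x) := by
    simp [ContinuousLinearMap.sub_apply, ContinuousLinearMap.mul_apply]
  rw [h1, inner_sub_right]
  have h2 : (⟪x, (star A) (A x)⟫_ℂ) = ⟪A x, A x⟫_ℂ := by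
    rw [star_eq_adjoint, ContinuousLinearMap.adjoint_inner_right]
  rw [h2]
  have h3 : (⟪x, x⟫_ℂ).re = ‖x‖ ^ 2 := by
    rw [← RCLike.re_to_complex, inner_self_eq_norm_sq (𝕜 := ℂ)]
  have h4 : (⟪A x, A x⟫_ℂ).re = ‖A x‖ ^ 2 := by
    rw [← RCLike.re_to_complex, inner_self_eq_norm_sq (𝕜 := ℂ)]
  rw [Complex.sub_re, h3, h4]

/-- If `c` is selfadjoint with `c * c = 1 - A* A` then `‖c x‖² = ‖x‖² - ‖A x‖²`. -/
lemma pl_sq_apply (c A : H →L[ℂ] H) (hsa : IsSelfAdjoint c)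
    (h : c * c = 1 - star A * A) (x : H) : ‖c x‖ ^ 2 = ‖x‖ ^ 2 - ‖A x‖ ^ 2 := by
  have h1 : (⟪c x, c x⟫_ℂ) = ⟪x, (1 - star A * A) x⟫_ℂ := by
    rw [← h]
    calc (⟪c x, c x⟫_ℂ) = ⟪adjoint c x, c x⟫_ℂ := by rw [hsa.adjoint_eq]
      _ = ⟪x, c (c x)⟫_ℂ := ContinuousLinearMap.adjoint_inner_left c (c x) x
      _ = ⟪x, (c * c) x⟫_ℂ := by rw [ContinuousLinearMap.mul_apply]
  have h2 : ‖c x‖ ^ 2 = (⟪c x, c x⟫_ℂ).re := by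
    rw [← RCLike.re_to_complex, inner_self_eq_norm_sq (𝕜 := ℂ)]
  rw [h2, h1, pl_inner_one_sub]

set_option maxHeartbeats 1000000 in
set_option synthInstance.maxHeartbeats 1000000 in
lemma pl_sqrt_exists (a : H →L[ℂ] H) (ha : 0 ≤ a) :
    ∃ d : H →L[ℂ] H, IsSelfAdjoint d ∧ d * d = a :=
  ⟨CFC.sqrt a,
    ((ContinuousLinearMap.nonneg_iff_isPositive _).mp (CFC.sqrt_nonneg (a := a))).isSelfAdjoint,
    CFC.sqrt_mul_sqrt_self a ha⟩

end PLaux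

theorem parrott_levy_formula
    {H : Type*} [NormedAddCommGroup H] [InnerProductSpace ℂ H] [CompleteSpace H]
    {ι : Type*} (b : HilbertBasis ι ℂ H)
    (t : H →L[ℂ] H) (ht : ‖t‖ ≤ 1)
    (hfin : opTrace b (1 - t * star t) ≠ ⊤)
    (tinf : H →L[ℂ] H)
    (htinf : ∀ h : H,
      Filter.Tendsto (fun k => (t ^ k * (star t) ^ k) h) Filter.atTop (nhds (tinf h)))
    (c : H →L[ℂ] H) (hc : c.IsPositive) (hc2 : c * c = 1 - star t * t) :
    ∃ L : ℝ≥0∞,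
      Filter.Tendsto (fun (k : ℕ) => opTrace b (1 - t ^ k * (star t) ^ k) / (k : ℝ≥0∞))
        Filter.atTop (nhds L) ∧
      opTrace b (c * (1 - tinf) * c) ≠ ⊤ ∧
      L + opTrace b (c * (1 - tinf) * c) = opTrace b (1 - t * star t) := by
  -- basic contraction estimates
  have ht1 : ∀ x : H, ‖t x‖ ≤ ‖x‖ := by
    intro x
    calc ‖t x‖ ≤ ‖t‖ * ‖x‖ := t.le_opNorm x
      _ ≤ 1 * ‖x‖ := by gcongr
      _ = ‖x‖ := one_mul _
  have hs1 : ∀ x : H, ‖(star t) x‖ ≤ ‖x‖ := by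
    intro x
    calc ‖(star t) x‖ ≤ ‖star t‖ * ‖x‖ := (star t).le_opNorm x
      _ ≤ 1 * ‖x‖ := by rw [norm_star]; gcongr
      _ = ‖x‖ := one_mul _
  have hpow : ∀ (A : H →L[ℂ] H), (∀ x, ‖A x‖ ≤ ‖x‖) → ∀ (k : ℕ) (x : H), ‖(A ^ k) x‖ ≤ ‖x‖ := by
    intro A hA k
    induction k with
    | zero => intro x; simp
    | succ n ih =>
      intro x
      rw [pow_succ, ContinuousLinearMap.mul_apply]
      exact (ih _).trans (hA x)
  -- s^(k+1) x = s (s^k x) style rewrites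
  have hssucc : ∀ (A : H →L[ℂ] H) (k : ℕ) (x : H), (A ^ (k + 1)) x = A ((A ^ k) x) := by
    intro A k x
    rw [pow_succ']
    rfl
  -- positivity of 1 - t t*
  have h1ts : (0 : H →L[ℂ] H) ≤ 1 - t * star t := by
    rw [ContinuousLinearMap.nonneg_iff_isPositive]
    constructor
    · rw [← ContinuousLinearMap.isSelfAdjoint_iff_isSymmetric, isSelfAdjoint_iff]
      simp [star_sub, star_mul]
    · intro x
      rw [ContinuousLinearMap.reApplyInnerSelf_apply]
      have he : (1 : H →L[ℂ] H) - t * star t = 1 - star (star t) * (star t) := by rw [star_star]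
      have h2 := pl_inner_one_sub (star t) x
      rw [← he] at h2
      have h3 : RCLike.re (⟪(1 - t * star t) x, x⟫_ℂ) = (⟪x, (1 - t * star t) x⟫_ℂ).re := by
        rw [RCLike.re_to_complex, pl_re_symm]
      rw [h3, h2]
      have := hs1 x
      nlinarith [norm_nonneg ((star t) x), norm_nonneg x]
  obtain ⟨d, hdsa, hdd⟩ := pl_sqrt_exists (1 - t * star t) h1ts
  have hdapp : ∀ y : H, ‖d y‖ ^ 2 = ‖y‖ ^ 2 - ‖(star t) y‖ ^ 2 := by
    intro y
    refine pl_sq_apply d (star t) hdsa ?_ y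
    rw [hdd, star_star]
  have hcapp : ∀ y : H, ‖c y‖ ^ 2 = ‖y‖ ^ 2 - ‖t y‖ ^ 2 :=
    fun y => pl_sq_apply c t hc.isSelfAdjoint hc2 y
  -- the key sequence U
  set U : ℕ → ℝ≥0∞ := fun j => ∑' i, ENNReal.ofReal (‖(t ^ j) (d (b i))‖ ^ 2) with hU_def
  have hnorm_b : ∀ i, ‖b i‖ = 1 := fun i => b.orthonormal.1 i
  -- trace of 1 - t^k (t*)^k in terms of norms
  have htr : ∀ k : ℕ, opTrace b (1 - t ^ k * (star t) ^ k)
      = ∑' i, ENNReal.ofReal (1 - ‖((star t) ^ k) (b i)‖ ^ 2) := by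
    intro k
    unfold opTrace
    congr 1; funext i
    congr 1
    have he : (1 : H →L[ℂ] H) - t ^ k * (star t) ^ k
        = 1 - star ((star t) ^ k) * ((star t) ^ k) := by
      rw [star_pow, star_star]
    rw [he, pl_inner_one_sub, hnorm_b i, one_pow]
  -- B j = U j via flip
  have hBU : ∀ j : ℕ, ∑' i, ENNReal.ofReal
      (‖((star t) ^ j) (b i)‖ ^ 2 - ‖((star t) ^ (j + 1)) (b i)‖ ^ 2) = U j := by
    intro j
    have hpt : ∀ i, ‖((star t) ^ j) (b i)‖ ^ 2 - ‖((star t) ^ (j + 1)) (b i)‖ ^ 2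
        = ‖(d * (star t) ^ j) (b i)‖ ^ 2 := by
      intro i
      rw [hssucc, ContinuousLinearMap.mul_apply, hdapp]
    simp_rw [hpt]
    rw [pl_flip b (d * (star t) ^ j)]
    have hst : star (d * (star t) ^ j) = t ^ j * d := by
      rw [star_mul, star_pow, star_star, hdsa]
    rw [hst]
    simp_rw [ContinuousLinearMap.mul_apply]
    rfl
  -- telescoping
  have hanti : ∀ (y : H) (j : ℕ), ‖((star t) ^ (j + 1)) y‖ ^ 2 ≤ ‖((star t) ^ j) y‖ ^ 2 := by
    intro y j
    rw [hssucc]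
    have := hs1 (((star t) ^ j) y)
    exact pow_le_pow_left₀ (norm_nonneg _) this 2
  have htel : ∀ (y : H) (k : ℕ), ENNReal.ofReal (‖y‖ ^ 2 - ‖((star t) ^ k) y‖ ^ 2)
      = ∑ j ∈ range k, ENNReal.ofReal
          (‖((star t) ^ j) y‖ ^ 2 - ‖((star t) ^ (j + 1)) y‖ ^ 2) := by
    intro y k
    rw [← ENNReal.ofReal_sum_of_nonneg (fun j _ => sub_nonneg.mpr (hanti y j))]
    congr 1
    rw [Finset.sum_range_sub' (fun j => ‖((star t) ^ j) y‖ ^ 2) k]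
    simp
  -- trace of D_k as partial sum of U
  have htrace_sum : ∀ k : ℕ, opTrace b (1 - t ^ k * (star t) ^ k) = ∑ j ∈ range k, U j := by
    intro k
    rw [htr k]
    have h1 : ∀ i, ENNReal.ofReal (1 - ‖((star t) ^ k) (b i)‖ ^ 2)
        = ∑ j ∈ range k, ENNReal.ofReal
            (‖((star t) ^ j) (b i)‖ ^ 2 - ‖((star t) ^ (j + 1)) (b i)‖ ^ 2) := by
      intro i
      rw [← htel (b i) k, hnorm_b i, one_pow]
    simp_rw [h1]
    rw [Summable.tsum_finsetSum (fun j _ => ENNReal.summable)]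
    exact Finset.sum_congr rfl fun j _ => hBU j
  -- A j + U (j+1) = U j
  have hAU : ∀ j : ℕ, (∑' i, ENNReal.ofReal
      (‖((star t) ^ j) (c (b i))‖ ^ 2 - ‖((star t) ^ (j + 1)) (c (b i))‖ ^ 2)) + U (j + 1)
      = U j := by
    intro j
    have hpt : ∀ i, ‖((star t) ^ j) (c (b i))‖ ^ 2 - ‖((star t) ^ (j + 1)) (c (b i))‖ ^ 2
        = ‖(d * ((star t) ^ j * c)) (b i)‖ ^ 2 := by
      intro i
      rw [hssucc, ContinuousLinearMap.mul_apply, ContinuousLinearMap.mul_apply, hdapp]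
    simp_rw [hpt]
    rw [pl_flip b (d * ((star t) ^ j * c))]
    have hst : star (d * ((star t) ^ j * c)) = c * (t ^ j * d) := by
      rw [star_mul, star_mul, star_pow, star_star, hdsa, hc.isSelfAdjoint.star_eq, mul_assoc]
    rw [hst]
    rw [← ENNReal.tsum_add]
    congr 1; funext i
    simp only [ContinuousLinearMap.mul_apply]
    rw [hcapp ((t ^ j) (d (b i)))]
    have htz : ‖(t ^ (j + 1)) (d (b i))‖ ^ 2 = ‖t ((t ^ j) (d (b i)))‖ ^ 2 := by
      rw [hssucc]
    rw [htz, ← ENNReal.ofReal_add (sub_nonneg.mpr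
      (pow_le_pow_left₀ (norm_nonneg _) (ht1 _) 2)) (by positivity), sub_add_cancel]
  -- W k + U k = U 0
  have hW : ∀ k : ℕ, (∑' i, ENNReal.ofReal
      (‖c (b i)‖ ^ 2 - ‖((star t) ^ k) (c (b i))‖ ^ 2)) + U k = U 0 := by
    intro k
    induction k with
    | zero => simp
    | succ n ih =>
      have hsplit : ∀ i, ENNReal.ofReal (‖c (b i)‖ ^ 2 - ‖((star t) ^ (n + 1)) (c (b i))‖ ^ 2)
          = ENNReal.ofReal (‖c (b i)‖ ^ 2 - ‖((star t) ^ n) (c (b i))‖ ^ 2)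
            + ENNReal.ofReal
              (‖((star t) ^ n) (c (b i))‖ ^ 2 - ‖((star t) ^ (n + 1)) (c (b i))‖ ^ 2) := by
        intro i
        have h1 : ‖((star t) ^ n) (c (b i))‖ ^ 2 ≤ ‖c (b i)‖ ^ 2 := by
          exact pow_le_pow_left₀ (norm_nonneg _) (hpow (star t) hs1 n (c (b i))) 2
        rw [← ENNReal.ofReal_add (sub_nonneg.mpr h1) (sub_nonneg.mpr (hanti (c (b i)) n))]
        congr 1
        ring
      calc (∑' i, ENNReal.ofReal (‖c (b i)‖ ^ 2 - ‖((star t) ^ (n + 1)) (c (b i))‖ ^ 2))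
            + U (n + 1)
          = ((∑' i, ENNReal.ofReal (‖c (b i)‖ ^ 2 - ‖((star t) ^ n) (c (b i))‖ ^ 2))
            + ∑' i, ENNReal.ofReal
              (‖((star t) ^ n) (c (b i))‖ ^ 2 - ‖((star t) ^ (n + 1)) (c (b i))‖ ^ 2))
            + U (n + 1) := by
            congr 1
            simp_rw [hsplit]
            rw [ENNReal.tsum_add]
        _ = (∑' i, ENNReal.ofReal (‖c (b i)‖ ^ 2 - ‖((star t) ^ n) (c (b i))‖ ^ 2))
            + ((∑' i, ENNReal.ofReal
              (‖((star t) ^ n) (c (b i))‖ ^ 2 - ‖((star t) ^ (n + 1)) (c (b i))‖ ^ 2))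
            + U (n + 1)) := by rw [add_assoc]
        _ = (∑' i, ENNReal.ofReal (‖c (b i)‖ ^ 2 - ‖((star t) ^ n) (c (b i))‖ ^ 2)) + U n := by
            rw [hAU n]
        _ = U 0 := ih
  -- U 0 is the trace of 1 - t t*
  have hU0eq : U 0 = opTrace b (1 - t * star t) := by
    have h1 : opTrace b (1 - t * star t) = opTrace b (1 - t ^ 1 * (star t) ^ 1) := by
      rw [pow_one, pow_one]
    rw [h1, htrace_sum 1, Finset.sum_range_one]
  have hUfin : ∀ j, U j ≠ ⊤ := by
    intro j
    have hle : U j ≤ U 0 := by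
      refine ENNReal.tsum_le_tsum fun i => ENNReal.ofReal_le_ofReal ?_
      have h2 : ‖(t ^ 0) (d (b i))‖ = ‖d (b i)‖ := by simp
      rw [h2]
      exact pow_le_pow_left₀ (norm_nonneg _) (hpow t ht1 j (d (b i))) 2
    exact ne_top_of_le_ne_top (hU0eq ▸ hfin) hle
  -- the real sequence u and its limit
  set u : ℕ → ℝ := fun j => (U j).toReal with hu_def
  have hUofReal : ∀ j, ENNReal.ofReal (u j) = U j := fun j => ENNReal.ofReal_toReal (hUfin j)
  have hu0 : ∀ j, 0 ≤ u j := fun j => ENNReal.toReal_nonneg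
  have hu_anti : Antitone u := by
    refine antitone_nat_of_succ_le fun n => ?_
    have hle : U (n + 1) ≤ U n := le_add_self.trans (le_of_eq (hAU n))
    exact ENNReal.toReal_le_toReal (hUfin _) (hUfin _) |>.mpr hle
  have hbdd : BddBelow (Set.range u) := ⟨0, by rintro x ⟨j, rfl⟩; exact hu0 j⟩
  set l : ℝ := ⨅ j, u j with hl_def
  have hl : Tendsto u atTop (nhds l) := tendsto_atTop_ciInf hu_anti hbdd
  have hl0 : 0 ≤ l := le_ciInf hu0
  have hlu : l ≤ u 0 := ciInf_le hbdd 0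
  have hterm : ∀ y : H, Tendsto (fun k : ℕ => ‖((star t) ^ k) y‖ ^ 2) atTop
      (nhds ((⟪y, tinf y⟫_ℂ).re)) := by
    intro y
    have h1 := htinf y
    have hcont : Continuous fun z : H => (⟪y, z⟫_ℂ).re :=
      Complex.continuous_re.comp (innerSL ℂ y).continuous
    have h2 : Tendsto (fun k : ℕ => (⟪y, (t ^ k * (star t) ^ k) y⟫_ℂ).re) atTop
        (nhds ((⟪y, tinf y⟫_ℂ).re)) := (hcont.tendsto (tinf y)).comp h1
    refine h2.congr fun k => ?_
    rw [ContinuousLinearMap.mul_apply]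
    have he : t ^ k = ContinuousLinearMap.adjoint ((star t) ^ k) := by
      rw [← star_eq_adjoint, star_pow, star_star]
    rw [he, ContinuousLinearMap.adjoint_inner_right]
    rw [← RCLike.re_to_complex, inner_self_eq_norm_sq (𝕜 := ℂ)]
  have hβterm : ∀ i, (inner ℂ (b i) ((c * (1 - tinf) * c) (b i)) : ℂ).re
      = ‖c (b i)‖ ^ 2 - (⟪c (b i), tinf (c (b i))⟫_ℂ).re := by
    intro i
    have happ : (c * (1 - tinf) * c) (b i) = c (c (b i) - tinf (c (b i))) := by
      simp [ContinuousLinearMap.mul_apply, ContinuousLinearMap.sub_apply]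
    rw [happ]
    have h2 : (⟪b i, c (c (b i) - tinf (c (b i)))⟫_ℂ)
        = ⟪c (b i), c (b i) - tinf (c (b i))⟫_ℂ := by
      conv_lhs => rw [show c (c (b i) - tinf (c (b i)))
        = ContinuousLinearMap.adjoint c (c (b i) - tinf (c (b i))) by
          rw [hc.isSelfAdjoint.adjoint_eq]]
      rw [ContinuousLinearMap.adjoint_inner_right]
    rw [h2, inner_sub_right, Complex.sub_re]
    congr 1
    rw [← RCLike.re_to_complex, inner_self_eq_norm_sq (𝕜 := ℂ)]
  have hmono : ∀ i, Monotone fun k : ℕ => ENNReal.ofReal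
      (‖c (b i)‖ ^ 2 - ‖((star t) ^ k) (c (b i))‖ ^ 2) := by
    intro i
    refine monotone_nat_of_le_succ fun k => ENNReal.ofReal_le_ofReal ?_
    have := hanti (c (b i)) k
    linarith
  have hβ2 : opTrace b (c * (1 - tinf) * c) = ENNReal.ofReal (u 0 - l) := by
    have hsupterm : ∀ i, ENNReal.ofReal (‖c (b i)‖ ^ 2 - (⟪c (b i), tinf (c (b i))⟫_ℂ).re)
        = ⨆ k : ℕ, ENNReal.ofReal (‖c (b i)‖ ^ 2 - ‖((star t) ^ k) (c (b i))‖ ^ 2) := by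
      intro i
      have htd := ENNReal.tendsto_ofReal ((tendsto_const_nhds (x := ‖c (b i)‖ ^ 2) (f := atTop)).sub (hterm (c (b i))))
      exact (tendsto_nhds_unique (tendsto_atTop_iSup (hmono i)) htd).symm
    calc opTrace b (c * (1 - tinf) * c)
        = ∑' i, ENNReal.ofReal (‖c (b i)‖ ^ 2 - (⟪c (b i), tinf (c (b i))⟫_ℂ).re) := by
          unfold opTrace; congr 1; funext i; rw [hβterm i]
      _ = ∑' i, ⨆ k : ℕ, ENNReal.ofReal
            (‖c (b i)‖ ^ 2 - ‖((star t) ^ k) (c (b i))‖ ^ 2) := by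
          simp_rw [hsupterm]
      _ = ⨆ k : ℕ, ∑' i, ENNReal.ofReal
            (‖c (b i)‖ ^ 2 - ‖((star t) ^ k) (c (b i))‖ ^ 2) :=
          pl_tsum_iSup _ hmono
      _ = ⨆ k : ℕ, ENNReal.ofReal (u 0 - u k) := by
          congr 1; funext k
          have h3 := ENNReal.eq_sub_of_add_eq (hUfin k) (hW k)
          rw [h3, ← hUofReal 0, ← hUofReal k, ← ENNReal.ofReal_sub _ (hu0 k)]
      _ = ENNReal.ofReal (u 0 - l) := by
          have hm2 : Monotone fun k : ℕ => ENNReal.ofReal (u 0 - u k) := by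
            intro k k' hkk
            refine ENNReal.ofReal_le_ofReal ?_
            have := hu_anti hkk
            linarith
          have htd2 := ENNReal.tendsto_ofReal ((tendsto_const_nhds (x := u 0) (f := atTop)).sub hl)
          exact tendsto_nhds_unique (tendsto_atTop_iSup hm2) htd2
  refine ⟨ENNReal.ofReal l, ?_, ?_, ?_⟩
  · -- the Cesàro limit
    have hsum_eq : ∀ k : ℕ, opTrace b (1 - t ^ k * (star t) ^ k)
        = ENNReal.ofReal (∑ j ∈ range k, u j) := by
      intro k
      rw [htrace_sum k, ENNReal.ofReal_sum_of_nonneg (fun j _ => hu0 j)]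
      exact Finset.sum_congr rfl fun j _ => (hUofReal j).symm
    have hces := hl.cesaro
    have hces2 : Tendsto (fun k : ℕ => ENNReal.ofReal ((k : ℝ)⁻¹ * ∑ j ∈ range k, u j))
        atTop (nhds (ENNReal.ofReal l)) := ENNReal.tendsto_ofReal hces
    refine hces2.congr' ?_
    filter_upwards [eventually_ge_atTop 1] with k hk
    have hkpos : (0 : ℝ) < k := by exact_mod_cast hk
    rw [hsum_eq k, inv_mul_eq_div, ENNReal.ofReal_div_of_pos hkpos, ENNReal.ofReal_natCast]
  · rw [hβ2]
    exact ENNReal.ofReal_ne_top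
  · rw [hβ2, ← ENNReal.ofReal_add hl0 (sub_nonneg.mpr hlu)]
    have hsum : l + (u 0 - l) = u 0 := by ring
    rw [hsum, hUofReal 0, hU0eq]
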